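/- Let N ≥ 1, M the N×N all-ones matrix, and B an N×N matrix with entries in {0,1} with exactly k ones, where 0 < k. Then the vector (V, W) with V_j = N + √k for all j and W_j = φ_j(B) + √k, where φ_j(B) is the number of ones in row j of B, is an eigenvector of the block matrix T = [[M, M],[B, M]] with eigenvalue N + √k. -/

import Mathlib

open Matrix in
/-- the vector `(V,W)` with `V_j = N + √k`, `W_j = φ_j(B) + √k`
is an eigenvector of `T = [[M,M],[B,M]]` with eigenvalue `N + √k`. -/
theorem stmt1 (N : ℕ) (hN : 1 ≤ N) (k : ℕ) (hk : 0 < k)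
    (B : Matrix (Fin N) (Fin N) ℝ)
    (hB01 : ∀ i j, B i j = 0 ∨ B i j = 1)
    (hBk : ∑ i, ∑ j, B i j = (k : ℝ)) :
    let M : Matrix (Fin N) (Fin N) ℝ := fun _ _ => 1
    let T : Matrix (Fin N ⊕ Fin N) (Fin N ⊕ Fin N) ℝ := Matrix.fromBlocks M M B M
    let u : Fin N ⊕ Fin N → ℝ :=
      Sum.elim (fun _ => (N : ℝ) + Real.sqrt k) (fun j => (∑ i, B j i) + Real.sqrt k)
    T.mulVec u = ((N : ℝ) + Real.sqrt k) • u ∧ u ≠ 0 := by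
  intro M T u
  have hs : Real.sqrt k * Real.sqrt k = (k : ℝ) := Real.mul_self_sqrt (by positivity)
  have hpos : (0:ℝ) < (N : ℝ) + Real.sqrt k := by
    have : (1:ℝ) ≤ (N:ℝ) := by exact_mod_cast hN
    have := Real.sqrt_nonneg (k:ℝ)
    linarith
  constructor
  · funext x
    cases x with
    | inl j =>
      simp only [T, u, M, Matrix.mulVec, dotProduct, Fintype.sum_sum_type,
        Matrix.fromBlocks_apply₁₁, Matrix.fromBlocks_apply₁₂, Matrix.fromBlocks, Matrix.of_apply, Pi.smul_apply, smul_eq_mul,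
        Sum.elim_inl, Sum.elim_inr, one_mul]
      rw [Finset.sum_const, Finset.sum_add_distrib, Finset.sum_const, hBk]
      simp only [Finset.card_univ, Fintype.card_fin, nsmul_eq_mul]
      linear_combination -hs
    | inr j =>
      simp only [T, u, M, Matrix.mulVec, dotProduct, Fintype.sum_sum_type,
        Matrix.fromBlocks_apply₂₁, Matrix.fromBlocks_apply₂₂, Matrix.fromBlocks, Matrix.of_apply, Pi.smul_apply, smul_eq_mul,
        Sum.elim_inl, Sum.elim_inr, one_mul]
      rw [Finset.sum_add_distrib, ← Finset.sum_mul, Finset.sum_const, hBk]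
      simp only [Finset.card_univ, Fintype.card_fin, nsmul_eq_mul]
      linear_combination -hs
  · intro h
    have := congrFun h (Sum.inl ⟨0, hN⟩)
    simp only [u, Sum.elim_inl, Pi.zero_apply] at this
    linarith
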